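/- arXiv:2408.03432 — 17 statements merged into one kernel-verified Lean document; each statement's English description precedes it below -/
import Mathlib

section
/- Let L be a lattice with a least element 0 and a unary operation ', and let ⊙ and → denote the Sasaki operations on L. If ⊙ and → satisfy condition (A2), then L satisfies the identity x ∧ x' = 0. -/
/-- In a lattice with bottom element `⊥` and unary operation `c`,
if the Sasaki operations satisfy condition (A2), then `x ⊓ c x = ⊥` for all `x`. -/
theorem sasaki_stmt_2 {L : Type*} [Lattice L] [OrderBot L] (c : L → L)
    (A2 : ∀ x y z : L, x ≤ c y ⊔ (y ⊓ z) → (x ⊔ c y) ⊓ y ≤ z) :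
    ∀ x : L, x ⊓ c x = ⊥ := by
  intro x
  have h := A2 (c x) x ⊥ (le_sup_left)
  simp only [sup_idem] at h
  exact le_bot_iff.mp (by rw [inf_comm]; exact h)
end

section
/- Let L be a bounded lattice (with least element 0 and greatest element 1) with a unary operation ', and let ⊙ and → denote the Sasaki operations on L. If ⊙ and → form an adjoint pair, then ' is a complementation on L, i.e. x ∨ x' = 1 and x ∧ x' = 0 for all x. -/
/-- In a bounded lattice with unary operation `c`, if the Sasaki
operations form an adjoint pair then `c` is a complementation. -/
theorem sasaki_stmt_3 {L : Type*} [Lattice L] [BoundedOrder L] (c : L → L)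
    (adj : ∀ x y z : L, (x ⊔ c y) ⊓ y ≤ z ↔ x ≤ c y ⊔ (y ⊓ z)) :
    ∀ x : L, x ⊔ c x = ⊤ ∧ x ⊓ c x = ⊥ := by
  intro x
  constructor
  · have h := (adj ⊤ x x).mp (by simp)
    simp only [inf_idem] at h
    exact le_antisymm le_top (le_trans h (by rw [sup_comm]))
  · have h := (adj (c x) x ⊥).mpr (by simp)
    simp only [sup_idem, le_bot_iff] at h
    rw [inf_comm]; exact h
end

section
/- Let L be a lattice with a unary operation ' satisfying identity (B1), and let ⊙ and → denote the Sasaki operations on L. Then ⊙ and → satisfy condition (A1): for all x,y,z, x ⊙ y ≤ z implies x ≤ y → z. -/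
/-- In a lattice with unary operation `c` satisfying identity (B1)
(`c y ⊔ ((x ⊔ c y) ⊓ y) = x ⊔ c y`), the Sasaki operations satisfy condition (A1). -/
theorem sasaki_stmt_4 {L : Type*} [Lattice L] (c : L → L)
    (B1 : ∀ x y : L, c y ⊔ ((x ⊔ c y) ⊓ y) = x ⊔ c y) :
    ∀ x y z : L, (x ⊔ c y) ⊓ y ≤ z → x ≤ c y ⊔ (y ⊓ z) := by
  intro x y z h
  calc x ≤ x ⊔ c y := le_sup_left
    _ = c y ⊔ ((x ⊔ c y) ⊓ y) := (B1 x y).symm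
    _ ≤ c y ⊔ (y ⊓ z) := sup_le_sup_left (le_inf inf_le_right h) _
end

section
/- Let L be a lattice with a unary operation ' satisfying identity (B2), and let ⊙ and → denote the Sasaki operations on L. Then ⊙ and → satisfy condition (A2): for all x,y,z, x ≤ y → z implies x ⊙ y ≤ z. -/
/-- In a lattice with unary operation `c` satisfying identity (B2)
(`(c x ⊔ (x ⊓ y)) ⊓ x = x ⊓ y`), the Sasaki operations satisfy condition (A2). -/
theorem sasaki_stmt_5 {L : Type*} [Lattice L] (c : L → L)
    (B2 : ∀ x y : L, (c x ⊔ (x ⊓ y)) ⊓ x = x ⊓ y) :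
    ∀ x y z : L, x ≤ c y ⊔ (y ⊓ z) → (x ⊔ c y) ⊓ y ≤ z := by
  intro x y z h
  have h1 : (x ⊔ c y) ⊓ y ≤ (c y ⊔ (y ⊓ z)) ⊓ y :=
    inf_le_inf_right y (sup_le h le_sup_left)
  calc (x ⊔ c y) ⊓ y ≤ (c y ⊔ (y ⊓ z)) ⊓ y := h1
    _ = y ⊓ z := B2 y z
    _ ≤ z := inf_le_right
end

section
/- Let L be a lattice with a unary operation ' satisfying both identities (B1) and (B2), and let ⊙ and → denote the Sasaki operations on L. Then ⊙ and → form an adjoint pair: for all x,y,z, x ⊙ y ≤ z if and only if x ≤ y → z. -/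
/-- In a lattice with unary operation `c` satisfying identities (B1)
and (B2), the Sasaki operations form an adjoint pair. -/
theorem sasaki_stmt_6 {L : Type*} [Lattice L] (c : L → L)
    (B1 : ∀ x y : L, c y ⊔ ((x ⊔ c y) ⊓ y) = x ⊔ c y)
    (B2 : ∀ x y : L, (c x ⊔ (x ⊓ y)) ⊓ x = x ⊓ y) :
    ∀ x y z : L, (x ⊔ c y) ⊓ y ≤ z ↔ x ≤ c y ⊔ (y ⊓ z) := by
  intro x y z
  constructor
  · intro h
    calc x ≤ x ⊔ c y := le_sup_left
    _ = c y ⊔ ((x ⊔ c y) ⊓ y) := (B1 x y).symm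
    _ ≤ c y ⊔ (y ⊓ z) := sup_le_sup_left (le_inf inf_le_right h) _
  · intro h
    have h2 : x ⊔ c y ≤ c y ⊔ (y ⊓ z) := sup_le h le_sup_left
    calc (x ⊔ c y) ⊓ y ≤ (c y ⊔ (y ⊓ z)) ⊓ y := inf_le_inf_right _ h2
    _ = y ⊓ z := B2 y z
    _ ≤ z := inf_le_right
end

section
/- Let L be a modular lattice with a greatest element 1 and a unary operation ' satisfying the identity x ∨ x' = 1. Then L satisfies identity (B1), and hence the Sasaki operations ⊙ and → on L satisfy condition (A1): for all x,y,z, x ⊙ y ≤ z implies x ≤ y → z. -/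
/-- A modular lattice with top element `⊤` and a unary operation `c`
satisfying `x ⊔ c x = ⊤` satisfies identity (B1); hence the Sasaki operations
satisfy condition (A1). -/
theorem sasaki_stmt_7 {L : Type*} [Lattice L] [OrderTop L] (c : L → L)
    (modular : ∀ x y z : L, x ≤ z → x ⊔ (y ⊓ z) = (x ⊔ y) ⊓ z)
    (compl_sup : ∀ x : L, x ⊔ c x = ⊤) :
    (∀ x y : L, c y ⊔ ((x ⊔ c y) ⊓ y) = x ⊔ c y) ∧
      (∀ x y z : L, (x ⊔ c y) ⊓ y ≤ z → x ≤ c y ⊔ (y ⊓ z)) := by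
  have B1 : ∀ x y : L, c y ⊔ ((x ⊔ c y) ⊓ y) = x ⊔ c y := by
    intro x y
    have h := modular (c y) y (x ⊔ c y) le_sup_right
    rw [inf_comm] at h
    rw [h]
    have : c y ⊔ y = ⊤ := by rw [sup_comm]; exact compl_sup y
    rw [this, top_inf_eq]
  refine ⟨B1, fun x y z h => ?_⟩
  calc x ≤ x ⊔ c y := le_sup_left
    _ = c y ⊔ ((x ⊔ c y) ⊓ y) := (B1 x y).symm
    _ ≤ c y ⊔ (y ⊓ z) := sup_le_sup_left (le_inf inf_le_right h) _
end

section
/- Let L be a modular lattice with a least element 0 and a unary operation ' satisfying the identity x ∧ x' = 0. Then L satisfies identity (B2), and hence the Sasaki operations ⊙ and → on L satisfy condition (A2): for all x,y,z, x ≤ y → z implies x ⊙ y ≤ z. -/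
/-- A modular lattice with bottom element `⊥` and a unary operation `c`
satisfying `x ⊓ c x = ⊥` satisfies identity (B2); hence the Sasaki operations
satisfy condition (A2). -/
theorem sasaki_stmt_8 {L : Type*} [Lattice L] [OrderBot L] (c : L → L)
    (modular : ∀ x y z : L, x ≤ z → x ⊔ (y ⊓ z) = (x ⊔ y) ⊓ z)
    (compl_inf : ∀ x : L, x ⊓ c x = ⊥) :
    (∀ x y : L, (c x ⊔ (x ⊓ y)) ⊓ x = x ⊓ y) ∧
      (∀ x y z : L, x ≤ c y ⊔ (y ⊓ z) → (x ⊔ c y) ⊓ y ≤ z) := by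
  have B2 : ∀ x y : L, (c x ⊔ (x ⊓ y)) ⊓ x = x ⊓ y := by
    intro x y
    have h := modular (x ⊓ y) (c x) x inf_le_left
    rw [inf_comm (c x) x, compl_inf, sup_bot_eq] at h
    rw [sup_comm] at h
    exact h.symm
  refine ⟨B2, fun x y z hx => ?_⟩
  calc (x ⊔ c y) ⊓ y ≤ ((c y ⊔ (y ⊓ z)) ⊔ c y) ⊓ y :=
        inf_le_inf_right _ (sup_le_sup_right hx _)
    _ = (c y ⊔ (y ⊓ z)) ⊓ y := by rw [sup_right_comm, sup_idem]
    _ = y ⊓ z := B2 y z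
    _ ≤ z := inf_le_right
end

section
/- Let L be a bounded modular lattice with a unary operation ' that is a complementation (i.e. x ∨ x' = 1 and x ∧ x' = 0 for all x). Then the Sasaki operations ⊙ and → on L form an adjoint pair: for all x,y,z, x ⊙ y ≤ z if and only if x ≤ y → z. -/
/-- In a bounded modular lattice with a complementation `c`,
the Sasaki operations form an adjoint pair. -/
theorem sasaki_stmt_9 {L : Type*} [Lattice L] [BoundedOrder L] (c : L → L)
    (modular : ∀ x y z : L, x ≤ z → x ⊔ (y ⊓ z) = (x ⊔ y) ⊓ z)
    (compl_sup : ∀ x : L, x ⊔ c x = ⊤) (compl_inf : ∀ x : L, x ⊓ c x = ⊥) :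
    ∀ x y z : L, (x ⊔ c y) ⊓ y ≤ z ↔ x ≤ c y ⊔ (y ⊓ z) := by
  intro x y z
  constructor
  · intro h
    have hm : c y ⊔ (y ⊓ (x ⊔ c y)) = (c y ⊔ y) ⊓ (x ⊔ c y) :=
      modular (c y) y (x ⊔ c y) le_sup_right
    have h1 : x ≤ c y ⊔ (y ⊓ (x ⊔ c y)) := by
      rw [hm, sup_comm (c y) y, compl_sup y, top_inf_eq]
      exact le_sup_left
    calc x ≤ c y ⊔ (y ⊓ (x ⊔ c y)) := h1
      _ ≤ c y ⊔ (y ⊓ z) := sup_le_sup_left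
            (le_inf inf_le_left (by rw [inf_comm]; exact h)) _
  · intro h
    have hm : (y ⊓ z) ⊔ (c y ⊓ y) = ((y ⊓ z) ⊔ c y) ⊓ y :=
      modular (y ⊓ z) (c y) y inf_le_left
    have : (x ⊔ c y) ⊓ y ≤ ((y ⊓ z) ⊔ c y) ⊓ y := by
      apply inf_le_inf_right
      exact sup_le (h.trans (by rw [sup_comm])) le_sup_right
    rw [← hm, inf_comm (c y) y, compl_inf y, sup_bot_eq] at this
    exact this.trans inf_le_right
end

section
/- Let L be a weakly orthomodular lattice whose unary operation ' is an involution (x'' = x for all x). Then L satisfies identity (B1), and hence the Sasaki operations ⊙ and → on L satisfy condition (A1): for all x,y,z, x ⊙ y ≤ z implies x ≤ y → z. -/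
/-- A weakly orthomodular lattice (`x = (x ⊓ y) ⊔ (x ⊓ c (x ⊓ y))`)
whose unary operation `c` is an involution satisfies identity (B1); hence the
Sasaki operations satisfy condition (A1). -/
theorem sasaki_stmt_10 {L : Type*} [Lattice L] (c : L → L)
    (wom : ∀ x y : L, x = (x ⊓ y) ⊔ (x ⊓ c (x ⊓ y)))
    (invol : ∀ x : L, c (c x) = x) :
    (∀ x y : L, c y ⊔ ((x ⊔ c y) ⊓ y) = x ⊔ c y) ∧
      (∀ x y z : L, (x ⊔ c y) ⊓ y ≤ z → x ≤ c y ⊔ (y ⊓ z)) := by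
  have B1 : ∀ x y : L, c y ⊔ ((x ⊔ c y) ⊓ y) = x ⊔ c y := by
    intro x y
    have h := wom (x ⊔ c y) (c y)
    rw [inf_eq_right.mpr le_sup_right, invol] at h
    exact h.symm
  refine ⟨B1, fun x y z hz => ?_⟩
  have hx : x ≤ c y ⊔ ((x ⊔ c y) ⊓ y) := by
    rw [B1]; exact le_sup_left
  exact hx.trans (sup_le_sup_left (le_inf inf_le_right hz) _)
end

section
/- Let L be a dually weakly orthomodular lattice with unary operation '. Then L satisfies identity (B2), and hence the Sasaki operations ⊙ and → on L satisfy condition (A2): for all x,y,z, x ≤ y → z implies x ⊙ y ≤ z. -/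
/-- A dually weakly orthomodular lattice (`x = (x ⊔ y) ⊓ (x ⊔ c (x ⊔ y))`)
satisfies identity (B2); hence the Sasaki operations satisfy condition (A2). -/
theorem sasaki_stmt_11 {L : Type*} [Lattice L] (c : L → L)
    (dwom : ∀ x y : L, x = (x ⊔ y) ⊓ (x ⊔ c (x ⊔ y))) :
    (∀ x y : L, (c x ⊔ (x ⊓ y)) ⊓ x = x ⊓ y) ∧
      (∀ x y z : L, x ≤ c y ⊔ (y ⊓ z) → (x ⊔ c y) ⊓ y ≤ z) := by
  have hB2 : ∀ x y : L, (c x ⊔ (x ⊓ y)) ⊓ x = x ⊓ y := by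
    intro x y
    have h := dwom (x ⊓ y) x
    have hx : (x ⊓ y) ⊔ x = x := sup_eq_right.mpr inf_le_left
    rw [hx] at h
    calc (c x ⊔ (x ⊓ y)) ⊓ x = x ⊓ ((x ⊓ y) ⊔ c x) := by rw [inf_comm, sup_comm]
      _ = x ⊓ y := h.symm
  refine ⟨hB2, fun x y z hx => ?_⟩
  have h1 : x ⊔ c y ≤ c y ⊔ (y ⊓ z) := sup_le hx le_sup_left
  calc (x ⊔ c y) ⊓ y ≤ (c y ⊔ (y ⊓ z)) ⊓ y := inf_le_inf_right y h1
    _ = y ⊓ z := hB2 y z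
    _ ≤ z := inf_le_right
end

section
/- Let L be an orthomodular lattice. Then the Sasaki operations ⊙ and → on L form an adjoint pair: for all x,y,z, x ⊙ y ≤ z if and only if x ≤ y → z. -/
/-- In an orthomodular lattice (a bounded lattice with a
complementation `c` that is an antitone involution satisfying the orthomodular
law), the Sasaki operations form an adjoint pair. -/
theorem sasaki_stmt_12 {L : Type*} [Lattice L] [BoundedOrder L] (c : L → L)
    (compl_sup : ∀ x : L, x ⊔ c x = ⊤) (compl_inf : ∀ x : L, x ⊓ c x = ⊥)
    (invol : ∀ x : L, c (c x) = x) (antitone : ∀ x y : L, x ≤ y → c y ≤ c x)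
    (om : ∀ x y : L, x ⊔ ((x ⊔ y) ⊓ c x) = x ⊔ y) :
    ∀ x y z : L, (x ⊔ c y) ⊓ y ≤ z ↔ x ≤ c y ⊔ (y ⊓ z) := by
  have dm1 : ∀ x y : L, c (x ⊔ y) = c x ⊓ c y := by
    intro x y
    apply le_antisymm
    · exact le_inf (antitone _ _ le_sup_left) (antitone _ _ le_sup_right)
    · have h1 : x ≤ c (c x ⊓ c y) := by
        have := antitone _ _ (inf_le_left : c x ⊓ c y ≤ c x)
        rwa [invol] at this
      have h2 : y ≤ c (c x ⊓ c y) := by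
        have := antitone _ _ (inf_le_right : c x ⊓ c y ≤ c y)
        rwa [invol] at this
      have := antitone _ _ (sup_le h1 h2)
      rwa [invol] at this
  have dm2 : ∀ x y : L, c (x ⊓ y) = c x ⊔ c y := by
    intro x y
    have := dm1 (c x) (c y)
    rw [invol, invol] at this
    rw [← this, invol]
  have omd : ∀ p q : L, p ≤ q → q ⊓ (c q ⊔ p) = p := by
    intro p q hpq
    have h := om (c q) (c p)
    rw [invol] at h
    have hcc : c q ⊔ c p = c p := sup_eq_right.mpr (antitone _ _ hpq)
    rw [hcc] at h
    have : c (q ⊓ (c q ⊔ p)) = c p := by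
      rw [dm2, dm1, invol, inf_comm]; exact h
    have := congrArg c this
    rwa [invol, invol] at this
  intro x y z
  constructor
  · intro h
    have h1 : x ≤ c y ⊔ ((c y ⊔ x) ⊓ y) := by
      have := om (c y) x
      rw [invol] at this
      calc x ≤ c y ⊔ x := le_sup_right
        _ = c y ⊔ ((c y ⊔ x) ⊓ y) := this.symm
    have h2 : (c y ⊔ x) ⊓ y ≤ y ⊓ z := by
      refine le_inf inf_le_right ?_
      rw [sup_comm]; exact h
    exact h1.trans (sup_le_sup_left h2 _)
  · intro h
    have h1 : (x ⊔ c y) ⊓ y ≤ (c y ⊔ (y ⊓ z)) ⊓ y :=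
      inf_le_inf_right _ (sup_le h le_sup_left)
    have h2 : (c y ⊔ (y ⊓ z)) ⊓ y = y ⊓ z := by
      rw [inf_comm]; exact omd (y ⊓ z) y inf_le_left
    calc (x ⊔ c y) ⊓ y ≤ (c y ⊔ (y ⊓ z)) ⊓ y := h1
      _ = y ⊓ z := h2
      _ ≤ z := inf_le_right
end

section
/- Let A be a λ-lattice with a unary operation ' which is bounded with respect to the induced order (with least element 0 and greatest element 1), and let ⊙ and → denote the Sasaki operations on A defined by x ⊙ y := (x ⊔ y') ⊓ y and x → y := x' ⊔ (x ⊓ y). If ⊙ and → form an adjoint pair with respect to the induced order, then ' is a complementation on A, i.e. x ⊔ x' = 1 and x ⊓ x' = 0 for all x. -/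
/-- A λ-lattice: two commutative binary operations satisfying the weak
associativity laws and the absorption laws. -/
structure LambdaLattice (A : Type*) where
  sup : A → A → A
  inf : A → A → A
  sup_comm : ∀ x y, sup x y = sup y x
  inf_comm : ∀ x y, inf x y = inf y x
  sup_assoc : ∀ x y z, sup x (sup (sup x y) z) = sup (sup x y) z
  inf_assoc : ∀ x y z, inf x (inf (inf x y) z) = inf (inf x y) z
  absorb_sup : ∀ x y, sup x (inf x y) = x
  absorb_inf : ∀ x y, inf x (sup x y) = x

/-- The induced order of a λ-lattice: `x ≤ y` iff `x ⊔ y = y`. -/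
def LambdaLattice.le {A : Type*} (L : LambdaLattice A) (x y : A) : Prop :=
  L.sup x y = y

lemma LambdaLattice.sup_idem {A : Type*} (L : LambdaLattice A) (x : A) :
    L.sup x x = x := by
  have h := L.absorb_sup x (L.sup x x)
  rwa [L.absorb_inf x x] at h

lemma LambdaLattice.inf_idem {A : Type*} (L : LambdaLattice A) (x : A) :
    L.inf x x = x := by
  have h := L.absorb_inf x x
  rwa [L.sup_idem x] at h

/-- In a λ-lattice with a unary operation `c`, bounded with respect
to the induced order (bottom `b`, top `t`), if the Sasaki operations
`x ⊙ y = (x ⊔ c y) ⊓ y` and `x → y = c x ⊔ (x ⊓ y)` form an adjoint pair with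
respect to the induced order, then `c` is a complementation. -/
theorem sasaki_stmt_13 {A : Type*} (L : LambdaLattice A) (c : A → A) (b t : A)
    (hbot : ∀ x, L.le b x) (htop : ∀ x, L.le x t)
    (adj : ∀ x y z : A, L.le (L.inf (L.sup x (c y)) y) z ↔ L.le x (L.sup (c y) (L.inf y z))) :
    ∀ x : A, L.sup x (c x) = t ∧ L.inf x (c x) = b := by
  intro x
  constructor
  · -- sup part
    have hle : L.le (L.inf (L.sup t (c x)) x) x := by
      unfold LambdaLattice.le
      rw [L.sup_comm, L.inf_comm]
      exact L.absorb_sup x (L.sup t (c x))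
    have h := (adj t x x).mp hle
    unfold LambdaLattice.le at h
    rw [L.inf_idem x] at h
    -- h : t ⊔ (c x ⊔ x) = c x ⊔ x ; htop : (c x ⊔ x) ⊔ t = t
    have h2 := htop (L.sup (c x) x)
    unfold LambdaLattice.le at h2
    rw [L.sup_comm] at h
    rw [L.sup_comm]
    rw [h] at h2
    exact h2
  · -- inf part
    have hle : L.le b (L.sup (c x) (L.inf x b)) := hbot _
    have h := (adj b x b).mpr hle
    unfold LambdaLattice.le at h
    have hb : L.sup b (c x) = c x := hbot (c x)
    rw [hb] at h
    -- h : (c x ⊓ x) ⊔ b = b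
    have h2 := hbot (L.inf (c x) x)
    unfold LambdaLattice.le at h2
    rw [L.sup_comm] at h2
    rw [h] at h2
    rw [L.inf_comm] at h2
    exact h2.symm
end

section
/- Let A be a λ-lattice with a unary operation ' satisfying conditions (D1) and (F1), and let ⊙ and → denote the Sasaki operations on A defined by x ⊙ y := (x ⊔ y') ⊓ y and x → y := x' ⊔ (x ⊓ y). Then ⊙ and → satisfy condition (A1) with respect to the induced order: for all x,y,z, x ⊙ y ≤ z implies x ≤ y → z. -/
/-- In a λ-lattice with a unary operation `c` satisfying conditions
(D1) and (F1), the Sasaki operations satisfy condition (A1) with respect to the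
induced order. -/
theorem sasaki_stmt_14 {A : Type*} (L : LambdaLattice A) (c : A → A)
    (D1 : ∀ x y : A, L.le (L.sup x (c y)) (L.sup (c y) (L.inf (L.sup x (c y)) y)))
    (F1 : ∀ x y z : A, L.le (L.inf (L.sup x (c y)) y) z →
      L.le (L.sup (c y) (L.inf y (L.inf (L.sup x (c y)) y))) (L.sup (c y) (L.inf y z))) :
    ∀ x y z : A, L.le (L.inf (L.sup x (c y)) y) z → L.le x (L.sup (c y) (L.inf y z)) := by
  -- basic facts
  have sup_idem : ∀ a : A, L.sup a a = a := fun a => by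
    conv_lhs => rw [show L.sup a a = L.sup a (L.inf a (L.sup a a)) from by
      rw [L.absorb_inf]]
    rw [L.absorb_sup]
  have inf_idem : ∀ a : A, L.inf a a = a := fun a => by
    conv_lhs => rw [show L.inf a a = L.inf a (L.sup a (L.inf a a)) from by
      rw [L.absorb_sup]]
    rw [L.absorb_inf]
  have le_trans : ∀ a b d : A, L.le a b → L.le b d → L.le a d := by
    intro a b d hab hbd
    unfold LambdaLattice.le at *
    have h1 : L.sup a d = L.sup a (L.sup (L.sup a b) d) := by rw [hab, hbd]
    rw [h1, L.sup_assoc, hab, hbd]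
  intro x y z h
  -- x ≤ x ⊔ y'
  have h1 : L.le x (L.sup x (c y)) := by
    unfold LambdaLattice.le
    have := L.sup_assoc x x (c y)
    rwa [sup_idem x] at this
  -- D1 : x ⊔ y' ≤ y' ⊔ ((x ⊔ y') ⊓ y)
  have h2 := D1 x y
  -- y ⊓ ((x ⊔ y') ⊓ y) = (x ⊔ y') ⊓ y
  have key : L.inf y (L.inf (L.sup x (c y)) y) = L.inf (L.sup x (c y)) y := by
    rw [L.inf_comm (L.sup x (c y)) y]
    have := L.inf_assoc y y (L.sup x (c y))
    rwa [inf_idem y] at this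
  have h3 := F1 x y z h
  rw [key] at h3
  exact le_trans _ _ _ h1 (le_trans _ _ _ h2 h3)
end

section
/- Let A be a λ-lattice with a unary operation ' satisfying conditions (D2) and (F2), and let ⊙ and → denote the Sasaki operations on A defined by x ⊙ y := (x ⊔ y') ⊓ y and x → y := x' ⊔ (x ⊓ y). Then ⊙ and → satisfy condition (A2) with respect to the induced order: for all x,y,z, x ≤ y → z implies x ⊙ y ≤ z. -/
/-- In a λ-lattice with a unary operation `c` satisfying conditions
(D2) and (F2), the Sasaki operations satisfy condition (A2) with respect to the
induced order. -/
theorem sasaki_stmt_15 {A : Type*} (L : LambdaLattice A) (c : A → A)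
    (D2 : ∀ x y : A, L.le (L.inf (L.sup (c x) (L.inf x y)) x) (L.inf x y))
    (F2 : ∀ x y z : A, L.le x (L.sup (c y) (L.inf y z)) →
      L.le (L.inf (L.sup x (c y)) y) (L.inf (L.sup (L.sup (c y) (L.inf y z)) (c y)) y)) :
    ∀ x y z : A, L.le x (L.sup (c y) (L.inf y z)) → L.le (L.inf (L.sup x (c y)) y) z := by

  intro x y z h
  have trans : ∀ p q r : A, L.le p q → L.le q r → L.le p r := by
    intro p q r hpq hqr
    unfold LambdaLattice.le at *
    have h' := L.sup_assoc p q r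
    rw [hpq, hqr] at h'
    exact h'
  set a := c y with ha
  set b := L.inf y z with hb
  set s := L.sup a b with hs
  have key : L.sup s a = s := by
    have h0 : L.sup s (L.inf s s) = s := L.absorb_sup s s
    have h1 := L.sup_assoc a b (L.inf s s)
    rw [← hs, h0] at h1
    rw [L.sup_comm s a, h1]
  have hF := F2 x y z h
  rw [key] at hF
  have hD : L.le (L.inf s y) b := D2 y z
  have hbz : L.le b z := by
    unfold LambdaLattice.le
    rw [L.sup_comm, hb, L.inf_comm, L.absorb_sup]
  exact trans _ _ _ (trans _ _ _ hF hD) hbz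
end

section
/- Let A be a λ-lattice with a unary operation ' satisfying conditions (D1) and (D2), and let ⊙ and → denote the Sasaki operations on A defined by x ⊙ y := (x ⊔ y') ⊓ y and x → y := x' ⊔ (x ⊓ y). Then the following are equivalent: (i) ⊙ and → form an adjoint pair with respect to the induced order; (ii) A satisfies conditions (E1) and (E2); (iii) A satisfies conditions (F1) and (F2). -/
namespace LambdaLattice

variable {A : Type*} (L : LambdaLattice A)

lemma sup_idem_s16 (x : A) : L.sup x x = x := by
  have h1 := L.absorb_inf x x
  have h2 := L.absorb_sup x (L.sup x x)
  rw [h1] at h2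
  exact h2

lemma le_refl (x : A) : L.le x x := L.sup_idem_s16 x

lemma le_trans {x y z : A} (h1 : L.le x y) (h2 : L.le y z) : L.le x z := by
  unfold LambdaLattice.le at *
  calc L.sup x z = L.sup x (L.sup y z) := by rw [h2]
    _ = L.sup x (L.sup (L.sup x y) z) := by rw [h1]
    _ = L.sup (L.sup x y) z := L.sup_assoc x y z
    _ = L.sup y z := by rw [h1]
    _ = z := h2

lemma le_sup_left (x y : A) : L.le x (L.sup x y) := by
  have h := L.sup_assoc x x y
  rw [L.sup_idem_s16] at h
  exact h

lemma inf_le_left (x y : A) : L.le (L.inf x y) x := by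
  unfold LambdaLattice.le
  rw [L.sup_comm]
  exact L.absorb_sup x y

lemma inf_le_right (x y : A) : L.le (L.inf x y) y := by
  rw [L.inf_comm]
  exact L.inf_le_left y x

lemma inf_eq_of_le {x y : A} (h : L.le x y) : L.inf x y = x := by
  have h2 := L.absorb_inf x y
  rw [h] at h2
  exact h2

end LambdaLattice

/-- In a λ-lattice with a unary operation `c` satisfying conditions
(D1) and (D2), the following are equivalent: (i) the Sasaki operations form an
adjoint pair with respect to the induced order; (ii) conditions (E1) and (E2)
hold; (iii) conditions (F1) and (F2) hold. -/
theorem sasaki_stmt_16 {A : Type*} (L : LambdaLattice A) (c : A → A)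
    (D1 : ∀ x y : A, L.le (L.sup x (c y)) (L.sup (c y) (L.inf (L.sup x (c y)) y)))
    (D2 : ∀ x y : A, L.le (L.inf (L.sup (c x) (L.inf x y)) x) (L.inf x y)) :
    ((∀ x y z : A, L.le (L.inf (L.sup x (c y)) y) z ↔ L.le x (L.sup (c y) (L.inf y z))) ↔
      ((∀ x y z : A, L.le x y → L.le (L.sup (c z) (L.inf z x)) (L.sup (c z) (L.inf z y))) ∧
       (∀ x y z : A, L.le x y → L.le (L.inf (L.sup x (c z)) z) (L.inf (L.sup y (c z)) z)))) ∧
    (((∀ x y z : A, L.le x y → L.le (L.sup (c z) (L.inf z x)) (L.sup (c z) (L.inf z y))) ∧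
      (∀ x y z : A, L.le x y → L.le (L.inf (L.sup x (c z)) z) (L.inf (L.sup y (c z)) z))) ↔
      ((∀ x y z : A, L.le (L.inf (L.sup x (c y)) y) z →
        L.le (L.sup (c y) (L.inf y (L.inf (L.sup x (c y)) y))) (L.sup (c y) (L.inf y z))) ∧
       (∀ x y z : A, L.le x (L.sup (c y) (L.inf y z)) →
        L.le (L.inf (L.sup x (c y)) y) (L.inf (L.sup (L.sup (c y) (L.inf y z)) (c y)) y)))) := by
  -- `fwd`: from an (F1)-style instance, deduce the forward direction of adjunction
  have fwd : ∀ x y z : A,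
      (L.le (L.inf (L.sup x (c y)) y) z →
        L.le (L.sup (c y) (L.inf y (L.inf (L.sup x (c y)) y))) (L.sup (c y) (L.inf y z))) →
      L.le (L.inf (L.sup x (c y)) y) z → L.le x (L.sup (c y) (L.inf y z)) := by
    intro x y z e1 h
    have hy : L.inf y (L.inf (L.sup x (c y)) y) = L.inf (L.sup x (c y)) y := by
      rw [L.inf_comm]
      exact L.inf_eq_of_le (L.inf_le_right _ _)
    have h1 : L.le x (L.sup (c y) (L.inf y (L.inf (L.sup x (c y)) y))) := by
      rw [hy]
      exact L.le_trans (L.le_sup_left x (c y)) (D1 x y)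
    exact L.le_trans h1 (e1 h)
  -- `bwd`: from an (F2)-style instance, deduce the backward direction of adjunction
  have bwd : ∀ x y z : A,
      (L.le x (L.sup (c y) (L.inf y z)) →
        L.le (L.inf (L.sup x (c y)) y) (L.inf (L.sup (L.sup (c y) (L.inf y z)) (c y)) y)) →
      L.le x (L.sup (c y) (L.inf y z)) → L.le (L.inf (L.sup x (c y)) y) z := by
    intro x y z e2 h
    have hsup : L.sup (L.sup (c y) (L.inf y z)) (c y) = L.sup (c y) (L.inf y z) := by
      rw [L.sup_comm]
      exact L.le_sup_left (c y) (L.inf y z)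
    have h2 := e2 h
    rw [hsup] at h2
    exact L.le_trans h2 (L.le_trans (D2 y z) (L.inf_le_right y z))
  -- `E_of_adj`: adjunction implies (E1) and (E2)
  have E_of_adj :
      (∀ x y z : A, L.le (L.inf (L.sup x (c y)) y) z ↔ L.le x (L.sup (c y) (L.inf y z))) →
      ((∀ x y z : A, L.le x y → L.le (L.sup (c z) (L.inf z x)) (L.sup (c z) (L.inf z y))) ∧
       (∀ x y z : A, L.le x y → L.le (L.inf (L.sup x (c z)) z) (L.inf (L.sup y (c z)) z))) := by
    intro adj
    constructor
    · intro x y z hxy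
      have h1 : L.le (L.inf (L.sup (L.sup (c z) (L.inf z x)) (c z)) z) x :=
        (adj (L.sup (c z) (L.inf z x)) z x).mpr (L.le_refl _)
      exact (adj (L.sup (c z) (L.inf z x)) z y).mp (L.le_trans h1 hxy)
    · intro x y z hxy
      have h1 : L.le y (L.sup (c z) (L.inf z (L.inf (L.sup y (c z)) z))) :=
        (adj y z (L.inf (L.sup y (c z)) z)).mp (L.le_refl _)
      exact (adj x z (L.inf (L.sup y (c z)) z)).mpr (L.le_trans hxy h1)
  constructor
  · constructor
    · exact E_of_adj
    · rintro ⟨e1, e2⟩ x y z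
      exact ⟨fun h => fwd x y z (fun hh => e1 _ z y hh) h,
             fun h => bwd x y z (fun hh => e2 x _ y hh) h⟩
  · constructor
    · rintro ⟨e1, e2⟩
      exact ⟨fun x y z h => e1 _ z y h, fun x y z h => e2 x _ y h⟩
    · rintro ⟨f1, f2⟩
      exact E_of_adj (fun x y z =>
        ⟨fun h => fwd x y z (f1 x y z) h, fun h => bwd x y z (f2 x y z) h⟩)
end

section
/- Let (S,+,·,0,',≤) be an ordered commutative semiring with a unary operation ' satisfying x·x' = 0 for all x, and let ⊙ and → denote the Sasaki operations on S defined by x ⊙ y := (x + y')·y and x → y := x' + x·y. If S satisfies conditions (3) and (4), then ⊙ and → satisfy condition (A1): for all x,y,z, x ⊙ y ≤ z implies x ≤ y → z. If S satisfies conditions (5) and (6), then ⊙ and → satisfy condition (A2): for all x,y,z, x ≤ y → z implies x ⊙ y ≤ z. Consequently, if S satisfies conditions (3)–(6), then ⊙ and → form an adjoint pair. -/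
/-- An ordered commutative semiring with a unary operation `compl` and a partial
order `le`, satisfying the identity `x · x' = 0`. No compatibility between the
order and the operations is assumed. -/
structure OrderedSemiringWithUnary (S : Type*) where
  add : S → S → S
  mul : S → S → S
  zero : S
  compl : S → S
  le : S → S → Prop
  add_comm : ∀ x y, add x y = add y x
  add_assoc : ∀ x y z, add (add x y) z = add x (add y z)
  add_zero : ∀ x, add x zero = x
  mul_comm : ∀ x y, mul x y = mul y x
  mul_assoc : ∀ x y z, mul (mul x y) z = mul x (mul y z)
  mul_zero : ∀ x, mul x zero = zero
  distrib : ∀ x y z, mul x (add y z) = add (mul x y) (mul x z)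
  le_refl : ∀ x, le x x
  le_trans : ∀ x y z, le x y → le y z → le x z
  le_antisymm : ∀ x y, le x y → le y x → x = y
  mul_compl : ∀ x, mul x (compl x) = zero

/-- In an ordered commutative semiring with a unary operation, with
Sasaki operations `x ⊙ y = (x + y')·y` and `x → y = x' + x·y`: conditions (3) and
(4) imply (A1); conditions (5) and (6) imply (A2); consequently conditions
(3)–(6) imply that `⊙` and `→` form an adjoint pair. -/
theorem sasaki_stmt_18 {S : Type*} (R : OrderedSemiringWithUnary S) :
    -- (3) ∧ (4) → (A1)
    (((∀ x y : S, R.le x (R.add (R.compl y) (R.mul (R.mul x y) y))) ∧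
      (∀ x y z : S, R.le x y →
        R.le (R.add (R.compl z) (R.mul z x)) (R.add (R.compl z) (R.mul z y)))) →
      ∀ x y z : S, R.le (R.mul (R.add x (R.compl y)) y) z →
        R.le x (R.add (R.compl y) (R.mul y z))) ∧
    -- (5) ∧ (6) → (A2)
    (((∀ x y z : S, R.le x y → R.le (R.mul x z) (R.mul y z)) ∧
      (∀ x y : S, R.le (R.mul x y) x)) →
      ∀ x y z : S, R.le x (R.add (R.compl y) (R.mul y z)) →
        R.le (R.mul (R.add x (R.compl y)) y) z) ∧
    -- (3) ∧ (4) ∧ (5) ∧ (6) → adjoint pair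
    (((∀ x y : S, R.le x (R.add (R.compl y) (R.mul (R.mul x y) y))) ∧
      (∀ x y z : S, R.le x y →
        R.le (R.add (R.compl z) (R.mul z x)) (R.add (R.compl z) (R.mul z y))) ∧
      (∀ x y z : S, R.le x y → R.le (R.mul x z) (R.mul y z)) ∧
      (∀ x y : S, R.le (R.mul x y) x)) →
      ∀ x y z : S, R.le (R.mul (R.add x (R.compl y)) y) z ↔
        R.le x (R.add (R.compl y) (R.mul y z))) := by

  have zmul : ∀ y : S, R.mul R.zero y = R.zero := fun y => by
    rw [R.mul_comm, R.mul_zero]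
  have zadd : ∀ y : S, R.add R.zero y = y := fun y => by
    rw [R.add_comm, R.add_zero]
  -- key computation: y * ((x + y') * y) = x * y * y  (up to y' + _)
  have key : ∀ x y : S,
      R.add (R.compl y) (R.mul y (R.mul (R.add x (R.compl y)) y))
        = R.add (R.compl y) (R.mul (R.mul x y) y) := by
    intro x y
    have h1 : R.mul (R.add x (R.compl y)) y
        = R.add (R.mul x y) (R.mul (R.compl y) y) := by
      rw [R.mul_comm, R.distrib, R.mul_comm y x, R.mul_comm y (R.compl y)]
    have h2 : R.mul (R.compl y) y = R.zero := by
      rw [R.mul_comm, R.mul_compl]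
    rw [h1, h2, R.add_zero, R.mul_comm y (R.mul x y), R.mul_assoc]
  have A1 : ((∀ x y : S, R.le x (R.add (R.compl y) (R.mul (R.mul x y) y))) ∧
      (∀ x y z : S, R.le x y →
        R.le (R.add (R.compl z) (R.mul z x)) (R.add (R.compl z) (R.mul z y)))) →
      ∀ x y z : S, R.le (R.mul (R.add x (R.compl y)) y) z →
        R.le x (R.add (R.compl y) (R.mul y z)) := by
    rintro ⟨h3, h4⟩ x y z h
    have h4' := h4 _ _ y h
    rw [key] at h4'
    exact R.le_trans _ _ _ (h3 x y) h4'
  have A2 : ((∀ x y z : S, R.le x y → R.le (R.mul x z) (R.mul y z)) ∧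
      (∀ x y : S, R.le (R.mul x y) x)) →
      ∀ x y z : S, R.le x (R.add (R.compl y) (R.mul y z)) →
        R.le (R.mul (R.add x (R.compl y)) y) z := by
    rintro ⟨h5, h6⟩ x y z h
    have h1 : R.mul (R.add x (R.compl y)) y = R.mul x y := by
      rw [R.mul_comm, R.distrib, R.mul_compl, R.add_zero, R.mul_comm]
    have h2 : R.mul (R.add (R.compl y) (R.mul y z)) y
        = R.mul z (R.mul y y) := by
      rw [R.mul_comm, R.distrib, R.mul_compl, zadd, ← R.mul_assoc, R.mul_comm]
    have step1 := h5 _ _ y h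
    rw [h1, h2] at *
    exact R.le_trans _ _ _ step1 (h6 z (R.mul y y))
  exact ⟨A1, A2, fun ⟨h3, h4, h5, h6⟩ x y z =>
    ⟨A1 ⟨h3, h4⟩ x y z, A2 ⟨h5, h6⟩ x y z⟩⟩
end

section
/- Let R be a Boolean ring. Define a unary operation by x' := x + 1 and a relation by x ≤ y iff x·y = x (a partial order on R). Then R, viewed as an ordered semiring with unary operation ', satisfies conditions (3)–(6), and consequently the Sasaki operations x ⊙ y := (x + y')·y and x → y := x' + x·y form an adjoint pair with respect to ≤. -/
/-- A Boolean ring with `x' := x + 1` and `x ≤ y :↔ x·y = x`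
satisfies conditions (3)–(6) of an ordered semiring with a unary operation, and
consequently the Sasaki operations `x ⊙ y = (x + y')·y` and `x → y = x' + x·y`
form an adjoint pair with respect to `≤`. -/
theorem sasaki_stmt_19 {R : Type*} [BooleanRing R] :
    -- (3): x ≤ y' + x·y·y
    (∀ x y : R, x * ((y + 1) + x * y * y) = x) ∧
    -- (4): x ≤ y → z' + z·x ≤ z' + z·y
    (∀ x y z : R, x * y = x →
      ((z + 1) + z * x) * ((z + 1) + z * y) = (z + 1) + z * x) ∧
    -- (5): x ≤ y → x·z ≤ y·z
    (∀ x y z : R, x * y = x → (x * z) * (y * z) = x * z) ∧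
    -- (6): x·y ≤ x
    (∀ x y : R, (x * y) * x = x * y) ∧
    -- adjoint pair: x ⊙ y ≤ z ↔ x ≤ y → z
    (∀ x y z : R, ((x + (y + 1)) * y) * z = (x + (y + 1)) * y ↔
      x * ((y + 1) + y * z) = x) := by
  have ms : ∀ a : R, a * a = a := BooleanRing.mul_self
  have as : ∀ a : R, a + a = 0 := fun a => BooleanRing.add_self a
  refine ⟨?_, ?_, ?_, ?_, ?_⟩
  · intro x y
    linear_combination ms (x * y) + as (x * y)
  · intro x y z h
    linear_combination (1 + x + y + x*y) * ms z + z * h + as z + as (z*y) + as (z*x)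
  · intro x y z h
    linear_combination x * y * ms z + z * h
  · intro x y
    linear_combination y * ms x
  · intro x y z
    have key : (x + (y + 1)) * y = x * y := by
      linear_combination ms y + as y
    rw [key]
    constructor <;> intro h
    · linear_combination h + as (x * y)
    · linear_combination h - as (x * y)
end
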